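/- (Hoeffding-Serfling, union bound form) Let v_1,...,v_N be real numbers with |v_j| <= R for all j, with mean mu = (1/N) sum_j v_j. Let J be a uniformly random subset of {1,...,N} of size m and set S_m = sum_{j in J} v_j. Then for all eps > 0, P( |(N/m) S_m - N mu| >= eps ) <= 2 exp( - alpha_m eps^2 / (2 N (1 - alpha_m) R^2) ), where alpha_m = (m-1)/N. -/

import Mathlib

open Real Finset

lemma hs_core (p : ℝ) (hp0 : 0 ≤ p) (hp1 : p ≤ 1) (h : ℝ) :
    1 - p + p * Real.exp h ≤ Real.exp (p * h + h ^ 2 / 8) := by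
  have hD : ∀ x : ℝ, 0 < 1 - p + p * Real.exp x := by
    intro x
    rcases eq_or_lt_of_le hp1 with h1 | h1
    · subst h1; simpa using Real.exp_pos x
    · nlinarith [Real.exp_pos x, mul_nonneg hp0 (Real.exp_pos x).le]
  set G : ℝ → ℝ := fun x => p * x + x ^ 2 / 8 - Real.log (1 - p + p * Real.exp x) with hGdef
  set Gd : ℝ → ℝ := fun x => p + x / 4 - p * Real.exp x / (1 - p + p * Real.exp x) with hGddef
  have hDfun : ∀ x : ℝ, HasDerivAt (fun x : ℝ => 1 - p + p * Real.exp x) (p * Real.exp x) x := by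
    intro x
    simpa using ((Real.hasDerivAt_exp x).const_mul p).const_add (1 - p)
  have hDG : ∀ x, HasDerivAt G (Gd x) x := by
    intro x
    have h2 : HasDerivAt (fun x : ℝ => Real.log (1 - p + p * Real.exp x))
        (p * Real.exp x / (1 - p + p * Real.exp x)) x := (hDfun x).log (hD x).ne'
    have h3 : HasDerivAt (fun x : ℝ => p * x + x ^ 2 / 8) (p + x / 4) x := by
      have hp' : HasDerivAt (fun x : ℝ => p * x) p x := by
        simpa using (hasDerivAt_id x).const_mul p
      have hq : HasDerivAt (fun x : ℝ => x ^ 2 / 8) (x / 4) x := by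
        have := (hasDerivAt_pow 2 x).div_const 8
        refine this.congr_deriv ?_
        simp only [Nat.cast_ofNat, Nat.add_one_sub_one, pow_one]
        ring
      exact hp'.add hq
    exact h3.sub h2
  have hDGd : ∀ x, HasDerivAt Gd
      (1 / 4 - p * Real.exp x * (1 - p) / (1 - p + p * Real.exp x) ^ 2) x := by
    intro x
    have hu : HasDerivAt (fun x : ℝ => p * Real.exp x) (p * Real.exp x) x :=
      (Real.hasDerivAt_exp x).const_mul p
    have hdiv := hu.div (hDfun x) (hD x).ne'
    have h14 : HasDerivAt (fun x : ℝ => p + x / 4) (1 / 4 : ℝ) x := by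
      simpa using ((hasDerivAt_id x).div_const 4).const_add p
    have := h14.sub hdiv
    refine this.congr_deriv ?_
    ring
  have hGdnn : ∀ x, 0 ≤ 1 / 4 - p * Real.exp x * (1 - p) / (1 - p + p * Real.exp x) ^ 2 := by
    intro x
    rw [sub_nonneg, div_le_iff₀ (pow_pos (hD x) 2)]
    nlinarith [sq_nonneg ((1 - p) - p * Real.exp x), Real.exp_pos x]
  have hGdmono : Monotone Gd :=
    monotone_of_deriv_nonneg (fun x => (hDGd x).differentiableAt)
      (fun x => by rw [(hDGd x).deriv]; exact hGdnn x)
  have hGd0 : Gd 0 = 0 := by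
    simp only [hGddef, Real.exp_zero, mul_one]
    have : 1 - p + p = 1 := by ring
    rw [this]
    ring
  have hGcont : Continuous G := by
    have : Differentiable ℝ G := fun x => (hDG x).differentiableAt
    exact this.continuous
  have hG0 : G 0 = 0 := by
    simp only [hGdef]
    norm_num [Real.exp_zero]
  have hGnn : ∀ x, 0 ≤ G x := by
    intro x
    rcases le_total 0 x with hx | hx
    · have hmono : MonotoneOn G (Set.Ici 0) := by
        apply monotoneOn_of_deriv_nonneg (convex_Ici 0) hGcont.continuousOn
          (fun y _ => (hDG y).differentiableAt.differentiableWithinAt)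
        intro y hy
        rw [interior_Ici] at hy
        rw [(hDG y).deriv]
        have := hGdmono (le_of_lt hy)
        rw [hGd0] at this
        linarith
      have := hmono (Set.mem_Ici.2 le_rfl) (Set.mem_Ici.2 hx) hx
      linarith [hG0 ▸ this]
    · have hmono : AntitoneOn G (Set.Iic 0) := by
        apply antitoneOn_of_deriv_nonpos (convex_Iic 0) hGcont.continuousOn
          (fun y _ => (hDG y).differentiableAt.differentiableWithinAt)
        intro y hy
        rw [interior_Iic] at hy
        rw [(hDG y).deriv]
        have := hGdmono (le_of_lt hy)
        rw [hGd0] at this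
        linarith
      have := hmono (Set.mem_Iic.2 hx) (Set.mem_Iic.2 le_rfl) hx
      linarith [hG0 ▸ this]
  have hgoal := hGnn h
  simp only [hGdef, sub_nonneg] at hgoal
  calc 1 - p + p * Real.exp h = Real.exp (Real.log (1 - p + p * Real.exp h)) :=
        (Real.exp_log (hD h)).symm
    _ ≤ Real.exp (p * h + h ^ 2 / 8) := Real.exp_le_exp.2 hgoal

lemma hs_finite {α : Type*} (s : Finset α) (hs : s.Nonempty)
    (f : α → ℝ) (a b lam mb : ℝ) (hab : a < b)
    (hfa : ∀ x ∈ s, a ≤ f x) (hfb : ∀ x ∈ s, f x ≤ b)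
    (hmb : ∑ x ∈ s, f x = s.card * mb) :
    ∑ x ∈ s, Real.exp (lam * f x)
      ≤ s.card * Real.exp (lam * mb + lam ^ 2 * (b - a) ^ 2 / 8) := by
  have hba : (0:ℝ) < b - a := sub_pos.2 hab
  have hcard : (0:ℝ) < s.card := by exact_mod_cast card_pos.2 hs
  -- mean in [a,b]
  have hma : a ≤ mb := by
    have h1 : s.card * a ≤ ∑ x ∈ s, f x := by
      calc (s.card : ℝ) * a = ∑ _x ∈ s, a := by rw [sum_const, nsmul_eq_mul]
        _ ≤ ∑ x ∈ s, f x := sum_le_sum hfa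
    rw [hmb] at h1
    exact le_of_mul_le_mul_left h1 hcard
  have hmbb : mb ≤ b := by
    have h1 : ∑ x ∈ s, f x ≤ s.card * b := by
      calc ∑ x ∈ s, f x ≤ ∑ _x ∈ s, b := sum_le_sum hfb
        _ = s.card * b := by rw [sum_const, nsmul_eq_mul]
    rw [hmb] at h1
    exact le_of_mul_le_mul_left h1 hcard
  -- convexity step
  have step1 : ∀ x ∈ s, Real.exp (lam * f x) ≤
      ((b - f x) * Real.exp (lam * a) + (f x - a) * Real.exp (lam * b)) / (b - a) := by
    intro x hx
    have w1 : 0 ≤ (b - f x) / (b - a) := by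
      apply div_nonneg _ hba.le; linarith [hfb x hx]
    have w2 : 0 ≤ (f x - a) / (b - a) := by
      apply div_nonneg _ hba.le; linarith [hfa x hx]
    have wsum : (b - f x) / (b - a) + (f x - a) / (b - a) = 1 := by
      field_simp
      ring
    have hc := convexOn_exp.2 (Set.mem_univ (lam * a)) (Set.mem_univ (lam * b)) w1 w2 wsum
    simp only [smul_eq_mul] at hc
    have harg : (b - f x) / (b - a) * (lam * a) + (f x - a) / (b - a) * (lam * b) = lam * f x := by
      field_simp
      ring
    rw [harg] at hc
    calc Real.exp (lam * f x) ≤ (b - f x) / (b - a) * Real.exp (lam * a)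
          + (f x - a) / (b - a) * Real.exp (lam * b) := hc
      _ = ((b - f x) * Real.exp (lam * a) + (f x - a) * Real.exp (lam * b)) / (b - a) := by
          ring
  have step2 : ∑ x ∈ s, Real.exp (lam * f x) ≤
      (s.card : ℝ) * (((b - mb) * Real.exp (lam * a) + (mb - a) * Real.exp (lam * b)) / (b - a)) := by
    calc ∑ x ∈ s, Real.exp (lam * f x)
        ≤ ∑ x ∈ s, ((b - f x) * Real.exp (lam * a) + (f x - a) * Real.exp (lam * b)) / (b - a) :=
          sum_le_sum step1
      _ = (s.card : ℝ) * (((b - mb) * Real.exp (lam * a) + (mb - a) * Real.exp (lam * b)) / (b - a)) := by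
          rw [← sum_div]
          rw [sum_add_distrib, ← sum_mul, ← sum_mul, sum_sub_distrib, sum_sub_distrib,
            sum_const, hmb, nsmul_eq_mul, sum_const, nsmul_eq_mul]
          field_simp
  refine step2.trans ?_
  apply mul_le_mul_of_nonneg_left _ hcard.le
  set p := (mb - a) / (b - a) with hp
  have hp0 : 0 ≤ p := by apply div_nonneg _ hba.le; linarith
  have hp1 : p ≤ 1 := by rw [div_le_one hba]; linarith
  have key := hs_core p hp0 hp1 (lam * (b - a))
  have hrw : ((b - mb) * Real.exp (lam * a) + (mb - a) * Real.exp (lam * b)) / (b - a)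
      = Real.exp (lam * a) * (1 - p + p * Real.exp (lam * (b - a))) := by
    have h1 : Real.exp (lam * b) = Real.exp (lam * a) * Real.exp (lam * (b - a)) := by
      rw [← Real.exp_add]; ring_nf
    rw [h1, hp]
    field_simp
    ring
  rw [hrw]
  calc Real.exp (lam * a) * (1 - p + p * Real.exp (lam * (b - a)))
      ≤ Real.exp (lam * a) * Real.exp (p * (lam * (b - a)) + (lam * (b - a)) ^ 2 / 8) :=
        mul_le_mul_of_nonneg_left key (Real.exp_pos _).le
    _ = Real.exp (lam * a + (p * (lam * (b - a)) + (lam * (b - a)) ^ 2 / 8)) := by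
        rw [← Real.exp_add]
    _ = Real.exp (lam * mb + lam ^ 2 * (b - a) ^ 2 / 8) := by
        congr 1
        rw [hp]
        field_simp
        ring

lemma hs_insert_sum (N k : ℕ) (f : Finset (Fin N) → ℝ) :
    ∑ K ∈ powersetCard k (univ : Finset (Fin N)), ∑ x ∈ Kᶜ, f (insert x K)
      = ∑ J ∈ powersetCard (k + 1) (univ : Finset (Fin N)), (J.card : ℝ) * f J := by
  rw [Finset.sum_sigma' (powersetCard k (univ : Finset (Fin N))) (fun K => Kᶜ)
    (fun K x => f (insert x K))]
  have : ∀ J ∈ powersetCard (k + 1) (univ : Finset (Fin N)), (J.card : ℝ) * f J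
      = ∑ _x ∈ J, f J := by
    intro J hJ
    rw [sum_const, nsmul_eq_mul]
  rw [Finset.sum_congr rfl this,
    Finset.sum_sigma' (powersetCard (k + 1) (univ : Finset (Fin N))) (fun J => J)
    (fun J _x => f J)]
  apply Finset.sum_nbij' (fun p => ⟨insert p.2 p.1, p.2⟩) (fun q => ⟨q.1.erase q.2, q.2⟩)
  · rintro ⟨K, x⟩ hp
    simp only [mem_sigma, mem_powersetCard, mem_compl] at hp ⊢
    obtain ⟨⟨-, hcard⟩, hx⟩ := hp
    refine ⟨⟨subset_univ _, ?_⟩, mem_insert_self _ _⟩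
    rw [card_insert_of_notMem hx, hcard]
  · rintro ⟨J, x⟩ hq
    simp only [mem_sigma, mem_powersetCard, mem_compl] at hq ⊢
    obtain ⟨⟨-, hcard⟩, hx⟩ := hq
    refine ⟨⟨subset_univ _, ?_⟩, notMem_erase _ _⟩
    rw [card_erase_of_mem hx, hcard]; omega
  · rintro ⟨K, x⟩ hp
    simp only [mem_sigma, mem_compl] at hp
    simp [Finset.erase_insert hp.2]
  · rintro ⟨J, x⟩ hq
    simp only [mem_sigma, mem_sigma] at hq
    simp [Finset.insert_erase hq.2]
  · rintro ⟨K, x⟩ hp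
    rfl

lemma hs_mgf (N : ℕ) (v : Fin N → ℝ) (R μ : ℝ) (hR : 0 < R)
    (hv : ∀ j, |v j| ≤ R) (hμ : ∑ j, v j = (N : ℝ) * μ) (lam : ℝ) :
    ∀ m : ℕ, m + 1 ≤ N →
    ∑ J ∈ powersetCard m (univ : Finset (Fin N)),
        Real.exp (lam * (((∑ j ∈ J, v j) - (m : ℝ) * μ) / ((N : ℝ) - m)))
      ≤ (N.choose m : ℝ) *
          Real.exp (lam ^ 2 * R ^ 2 / 2 * ∑ i ∈ Icc 1 m, 1 / ((N : ℝ) - i) ^ 2) := by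
  intro m
  induction m with
  | zero =>
      intro _
      simp [powersetCard_zero]
  | succ m ih =>
      intro hm2
      have hm1 : m + 1 ≤ N := by omega
      have ihm := ih hm1
      have hNm : (0 : ℝ) < (N : ℝ) - m := by
        have : (m : ℝ) + 1 ≤ N := by exact_mod_cast hm1
        linarith
      have hNm1 : (0 : ℝ) < (N : ℝ) - (m + 1 : ℕ) := by
        have : ((m : ℝ) + 1) + 1 ≤ N := by exact_mod_cast hm2
        push_cast
        linarith
      have hNm1' : (0 : ℝ) < (N : ℝ) - m - 1 := by push_cast at hNm1 ⊢; linarith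
      -- per-K bound
      have perK : ∀ K ∈ powersetCard m (univ : Finset (Fin N)),
          ∑ x ∈ Kᶜ, Real.exp (lam * (((∑ j ∈ insert x K, v j) - ((m + 1 : ℕ) : ℝ) * μ)
              / ((N : ℝ) - (m + 1 : ℕ))))
          ≤ ((N : ℝ) - m) * Real.exp (lam ^ 2 * R ^ 2 / 2 * (1 / ((N : ℝ) - (m + 1 : ℕ)) ^ 2))
              * Real.exp (lam * (((∑ j ∈ K, v j) - (m : ℝ) * μ) / ((N : ℝ) - m))) := by
        intro K hK
        rw [mem_powersetCard] at hK
        obtain ⟨-, hKcard⟩ := hK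
        have hcardc : (Kᶜ : Finset (Fin N)).card = N - m := by
          rw [card_compl, hKcard, Fintype.card_fin]
        have hcardcR : ((Kᶜ : Finset (Fin N)).card : ℝ) = (N : ℝ) - m := by
          rw [hcardc, Nat.cast_sub (by omega)]
        have hne : (Kᶜ : Finset (Fin N)).Nonempty := by
          rw [← card_pos, hcardc]; omega
        set S : ℝ := ∑ j ∈ K, v j with hS
        have hsumc : ∑ x ∈ Kᶜ, v x = (N : ℝ) * μ - S := by
          have := Finset.sum_compl_add_sum K v
          rw [hμ] at this
          linarith
        set d : ℝ := (N : ℝ) - m - 1 with hd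
        have hdpos : 0 < d := hNm1'
        have hNcast : ((N : ℝ) - (m + 1 : ℕ)) = d := by push_cast; ring
        -- apply hs_finite
        have happ := hs_finite (Kᶜ : Finset (Fin N)) hne
          (fun x => ((∑ j ∈ insert x K, v j) - ((m + 1 : ℕ) : ℝ) * μ) / d)
          ((S - ((m : ℝ) + 1) * μ - R) / d) ((S - ((m : ℝ) + 1) * μ + R) / d) lam
          ((S - (m : ℝ) * μ) / ((N : ℝ) - m))
          (div_lt_div_of_pos_right (by linarith) hdpos)
          ?_ ?_ ?_
        · -- conclude from happ
          rw [hNcast]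
          refine le_trans (le_of_eq ?_) (happ.trans (le_of_eq ?_))
          · rfl
          · rw [hcardcR, mul_assoc, ← Real.exp_add]
            congr 2
            have hba : (S - ((m : ℝ) + 1) * μ + R) / d - (S - ((m : ℝ) + 1) * μ - R) / d
                = 2 * R / d := by field_simp; ring
            rw [hba]
            field_simp
            ring
        · -- lower bound
          intro x hx
          rw [mem_compl] at hx
          simp only [Finset.sum_insert hx]
          rw [div_le_div_iff_of_pos_right hdpos]
          have := (abs_le.1 (hv x)).1
          push_cast
          linarith
        · intro x hx
          rw [mem_compl] at hx
          simp only [Finset.sum_insert hx]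
          rw [div_le_div_iff_of_pos_right hdpos]
          have := (abs_le.1 (hv x)).2
          push_cast
          linarith
        · -- mean identity
          have : ∑ x ∈ Kᶜ, (((∑ j ∈ insert x K, v j) - ((m + 1 : ℕ) : ℝ) * μ) / d)
              = (∑ x ∈ Kᶜ, ((v x + S) - ((m : ℝ) + 1) * μ)) / d := by
            rw [Finset.sum_div]
            apply Finset.sum_congr rfl
            intro x hx
            rw [mem_compl] at hx
            rw [Finset.sum_insert hx]
            push_cast
            ring_nf
            rw [hS]; ring
          rw [this, Finset.sum_sub_distrib, Finset.sum_add_distrib, hsumc,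
            Finset.sum_const, Finset.sum_const, nsmul_eq_mul, nsmul_eq_mul, hcardcR]
          field_simp
          ring
      -- assemble
      have hins := hs_insert_sum N m (fun J => Real.exp (lam * (((∑ j ∈ J, v j)
        - ((m + 1 : ℕ) : ℝ) * μ) / ((N : ℝ) - (m + 1 : ℕ)))))
      have hcardJ : ∑ J ∈ powersetCard (m + 1) (univ : Finset (Fin N)),
          (J.card : ℝ) * Real.exp (lam * (((∑ j ∈ J, v j) - ((m + 1 : ℕ) : ℝ) * μ)
            / ((N : ℝ) - (m + 1 : ℕ))))
          = ((m + 1 : ℕ) : ℝ) * ∑ J ∈ powersetCard (m + 1) (univ : Finset (Fin N)),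
              Real.exp (lam * (((∑ j ∈ J, v j) - ((m + 1 : ℕ) : ℝ) * μ)
                / ((N : ℝ) - (m + 1 : ℕ)))) := by
        rw [Finset.mul_sum]
        apply Finset.sum_congr rfl
        intro J hJ
        rw [mem_powersetCard] at hJ
        rw [hJ.2]
      have hchoose : (N.choose m : ℝ) * ((N : ℝ) - m) = ((m + 1 : ℕ) : ℝ) * (N.choose (m + 1) : ℝ) := by
        have := Nat.choose_succ_right_eq N m
        have hcast : ((N.choose (m + 1) * (m + 1) : ℕ) : ℝ) = ((N.choose m * (N - m) : ℕ) : ℝ) := by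
          exact_mod_cast congrArg (Nat.cast : ℕ → ℝ) this
        push_cast [Nat.cast_sub (by omega : m ≤ N)] at hcast
        push_cast
        linarith
      have hm1pos : (0 : ℝ) < ((m + 1 : ℕ) : ℝ) := by positivity
      rw [← mul_le_mul_iff_right₀ hm1pos]
      calc ((m + 1 : ℕ) : ℝ) * ∑ J ∈ powersetCard (m + 1) (univ : Finset (Fin N)),
            Real.exp (lam * (((∑ j ∈ J, v j) - ((m + 1 : ℕ) : ℝ) * μ) / ((N : ℝ) - (m + 1 : ℕ))))
          = ∑ K ∈ powersetCard m (univ : Finset (Fin N)), ∑ x ∈ Kᶜ,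
              Real.exp (lam * (((∑ j ∈ insert x K, v j) - ((m + 1 : ℕ) : ℝ) * μ)
                / ((N : ℝ) - (m + 1 : ℕ)))) := by
            rw [hins, hcardJ]
        _ ≤ ∑ K ∈ powersetCard m (univ : Finset (Fin N)),
            ((N : ℝ) - m) * Real.exp (lam ^ 2 * R ^ 2 / 2 * (1 / ((N : ℝ) - (m + 1 : ℕ)) ^ 2))
              * Real.exp (lam * (((∑ j ∈ K, v j) - (m : ℝ) * μ) / ((N : ℝ) - m))) :=
            Finset.sum_le_sum perK
        _ = ((N : ℝ) - m) * Real.exp (lam ^ 2 * R ^ 2 / 2 * (1 / ((N : ℝ) - (m + 1 : ℕ)) ^ 2))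
              * ∑ K ∈ powersetCard m (univ : Finset (Fin N)),
                Real.exp (lam * (((∑ j ∈ K, v j) - (m : ℝ) * μ) / ((N : ℝ) - m))) := by
            rw [Finset.mul_sum]
        _ ≤ ((N : ℝ) - m) * Real.exp (lam ^ 2 * R ^ 2 / 2 * (1 / ((N : ℝ) - (m + 1 : ℕ)) ^ 2))
              * ((N.choose m : ℝ) *
                Real.exp (lam ^ 2 * R ^ 2 / 2 * ∑ i ∈ Icc 1 m, 1 / ((N : ℝ) - i) ^ 2)) := by
            apply mul_le_mul_of_nonneg_left ihm
            positivity
        _ = ((m + 1 : ℕ) : ℝ) * ((N.choose (m + 1) : ℝ) *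
              Real.exp (lam ^ 2 * R ^ 2 / 2 * ∑ i ∈ Icc 1 (m + 1), 1 / ((N : ℝ) - i) ^ 2)) := by
            rw [Finset.sum_Icc_succ_top (by omega : 1 ≤ m + 1), mul_add, Real.exp_add]
            linear_combination (Real.exp (lam ^ 2 * R ^ 2 / 2 * ∑ i ∈ Icc 1 m, 1 / ((N : ℝ) - i) ^ 2)
              * Real.exp (lam ^ 2 * R ^ 2 / 2 * (1 / ((N : ℝ) - ((m + 1 : ℕ) : ℝ)) ^ 2))) * hchoose

lemma hs_sum_sq (N : ℕ) : ∀ m : ℕ, m + 1 ≤ N →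
    ∑ i ∈ Icc 1 m, 1 / ((N : ℝ) - i) ^ 2
      ≤ 1 / ((N : ℝ) - m - 1/2) - 1 / ((N : ℝ) - 1/2) := by
  have gen : ∀ y : ℝ, 1 ≤ y → (1:ℝ) / y ^ 2 ≤ 1 / (y - 1/2) - 1 / (y + 1/2) := by
    intro y hy
    have h1 : (0:ℝ) < y ^ 2 - 1/4 := by nlinarith
    have h4 : 1 / (y - 1/2) - 1 / (y + 1/2) = 1 / (y ^ 2 - 1/4) := by
      have a1 : y - 1/2 ≠ 0 := by intro h; rw [sub_eq_zero] at h; rw [h] at hy; norm_num at hy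
      have a2 : y + 1/2 ≠ 0 := by nlinarith
      have expand : (y - 1/2) * (y + 1/2) = y ^ 2 - 1/4 := by ring
      rw [div_sub_div _ _ a1 a2, expand]
      congr 1
      ring
    rw [h4]
    exact one_div_le_one_div_of_le h1 (by linarith)
  intro m
  induction m with
  | zero => intro _; simp
  | succ m ih =>
      intro hm2
      have hx : (1 : ℝ) ≤ (N : ℝ) - (m + 1 : ℕ) := by
        have : ((m : ℝ) + 1) + 1 ≤ N := by exact_mod_cast hm2
        push_cast
        linarith
      have hstep := gen ((N : ℝ) - (m + 1 : ℕ)) hx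
      have h5 : (N : ℝ) - m - 1/2 = ((N : ℝ) - (m + 1 : ℕ)) + 1/2 := by push_cast; ring
      rw [Finset.sum_Icc_succ_top (by omega : 1 ≤ m + 1)]
      have hih := ih (by omega)
      rw [h5] at hih
      push_cast at hstep hih ⊢
      linarith

set_option maxHeartbeats 1000000 in
/-- Hoeffding–Serfling inequality (union-bound form): sampling `m` of the reals
`v₁,…,v_N` uniformly without replacement (i.e. a uniform subset `J` of size `m`),
the rescaled sample sum `(N/m) ∑_{j ∈ J} vⱼ` concentrates around `N μ`:
`P(|(N/m) S_m - N μ| ≥ ε) ≤ 2 exp(-α_m ε² / (2 N (1-α_m) R²))` with `α_m = (m-1)/N`. -/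
theorem hoeffding_serfling (N m : ℕ) (hm : 1 ≤ m) (hmN : m ≤ N)
    (v : Fin N → ℝ) (R : ℝ) (hR : 0 < R) (hv : ∀ j, |v j| ≤ R)
    (μ : ℝ) (hμ : μ = (1 / (N : ℝ)) * ∑ j, v j)
    (ε : ℝ) (hε : 0 < ε) :
    (((Finset.univ.powersetCard m : Finset (Finset (Fin N))).filter
        (fun J => ε ≤ |((N : ℝ) / m) * (∑ j ∈ J, v j) - N * μ|)).card : ℝ) /
      ((Finset.univ.powersetCard m : Finset (Finset (Fin N))).card : ℝ) ≤
    2 * exp (-(((m : ℝ) - 1) / N) * ε ^ 2 /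
        (2 * N * (1 - ((m : ℝ) - 1) / N) * R ^ 2)) := by
  have hN1 : 1 ≤ N := le_trans hm hmN
  have hN0 : (0 : ℝ) < N := by exact_mod_cast hN1
  have hm0 : (0 : ℝ) < m := by exact_mod_cast hm
  have hμ' : ∑ j, v j = (N : ℝ) * μ := by
    rw [hμ]; field_simp
  -- trivial case m = N
  by_cases hmN' : m = N
  · subst hmN'
    have huniv : (Finset.univ.powersetCard m : Finset (Finset (Fin m))) = {univ} := by
      have h := Finset.powersetCard_self (univ : Finset (Fin m))
      rwa [Finset.card_univ, Fintype.card_fin] at h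
    rw [huniv]
    have hpred : ¬ (ε ≤ |((m : ℝ) / m) * (∑ j ∈ (univ : Finset (Fin m)), v j) - m * μ|) := by
      rw [div_self (ne_of_gt hm0), one_mul, hμ', sub_self, abs_zero]
      linarith
    rw [Finset.filter_singleton]
    simp only [hpred, if_false]
    simp only [Finset.card_empty, Nat.cast_zero, zero_div]
    positivity
  -- main case m < N
  have hmN2 : m + 1 ≤ N := by omega
  have hNmR : (1 : ℝ) ≤ (N : ℝ) - m := by
    have : (m : ℝ) + 1 ≤ N := by exact_mod_cast hmN2
    linarith
  have hNm0 : (0 : ℝ) < (N : ℝ) - m := by linarith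
  set Sb : ℝ := ∑ i ∈ Icc 1 m, 1 / ((N : ℝ) - i) ^ 2 with hSb
  have hSbpos : 0 < Sb := by
    apply Finset.sum_pos
    · intro i hi
      rw [Finset.mem_Icc] at hi
      have : (i : ℝ) ≤ m := by exact_mod_cast hi.2
      have : (0 : ℝ) < (N : ℝ) - i := by linarith
      positivity
    · exact ⟨1, Finset.mem_Icc.2 ⟨le_refl 1, hm⟩⟩
  set V : ℝ := R ^ 2 * Sb with hV
  have hVpos : 0 < V := by positivity
  set a : ℝ := (m : ℝ) * ε / ((N : ℝ) * ((N : ℝ) - m)) with ha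
  have hapos : 0 < a := by positivity
  set lam : ℝ := a / V with hlam
  have hlampos : 0 < lam := by positivity
  set Z : Finset (Fin N) → ℝ := fun J => ((∑ j ∈ J, v j) - (m : ℝ) * μ) / ((N : ℝ) - m) with hZ
  set P : Finset (Finset (Fin N)) := (Finset.univ : Finset (Fin N)).powersetCard m with hP
  have hmgf := hs_mgf N v R μ hR hv hμ' lam m hmN2
  have hmgf' := hs_mgf N v R μ hR hv hμ' (-lam) m hmN2
  have hCpos : (0 : ℝ) < (N.choose m : ℝ) := by exact_mod_cast Nat.choose_pos hmN
  have upper : (((P.filter (fun J => a ≤ Z J)).card : ℝ)) * Real.exp (lam * a)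
      ≤ (N.choose m : ℝ) * Real.exp (lam ^ 2 * R ^ 2 / 2 * Sb) := by
    calc (((P.filter (fun J => a ≤ Z J)).card : ℝ)) * Real.exp (lam * a)
        = ∑ _J ∈ P.filter (fun J => a ≤ Z J), Real.exp (lam * a) := by
          rw [Finset.sum_const, nsmul_eq_mul]
      _ ≤ ∑ J ∈ P.filter (fun J => a ≤ Z J), Real.exp (lam * Z J) := by
          apply Finset.sum_le_sum
          intro J hJ
          exact Real.exp_le_exp.2
            (mul_le_mul_of_nonneg_left (Finset.mem_filter.1 hJ).2 hlampos.le)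
      _ ≤ ∑ J ∈ P, Real.exp (lam * Z J) :=
          Finset.sum_le_sum_of_subset_of_nonneg (Finset.filter_subset _ _)
            (fun _ _ _ => (Real.exp_pos _).le)
      _ ≤ _ := hmgf
  have lower : (((P.filter (fun J => Z J ≤ -a)).card : ℝ)) * Real.exp (lam * a)
      ≤ (N.choose m : ℝ) * Real.exp (lam ^ 2 * R ^ 2 / 2 * Sb) := by
    calc (((P.filter (fun J => Z J ≤ -a)).card : ℝ)) * Real.exp (lam * a)
        = ∑ _J ∈ P.filter (fun J => Z J ≤ -a), Real.exp (lam * a) := by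
          rw [Finset.sum_const, nsmul_eq_mul]
      _ ≤ ∑ J ∈ P.filter (fun J => Z J ≤ -a), Real.exp ((-lam) * Z J) := by
          apply Finset.sum_le_sum
          intro J hJ
          apply Real.exp_le_exp.2
          have hZJ := (Finset.mem_filter.1 hJ).2
          nlinarith [mul_le_mul_of_nonneg_left hZJ hlampos.le]
      _ ≤ ∑ J ∈ P, Real.exp ((-lam) * Z J) :=
          Finset.sum_le_sum_of_subset_of_nonneg (Finset.filter_subset _ _)
            (fun _ _ _ => (Real.exp_pos _).le)
      _ ≤ (N.choose m : ℝ) * Real.exp ((-lam) ^ 2 * R ^ 2 / 2 * Sb) := hmgf'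
      _ = (N.choose m : ℝ) * Real.exp (lam ^ 2 * R ^ 2 / 2 * Sb) := by rw [neg_sq]
  -- event inclusion
  have hsub : P.filter (fun J => ε ≤ |((N : ℝ) / m) * (∑ j ∈ J, v j) - N * μ|)
      ⊆ (P.filter (fun J => a ≤ Z J)) ∪ (P.filter (fun J => Z J ≤ -a)) := by
    intro J hJ
    rw [Finset.mem_filter] at hJ
    obtain ⟨hJP, hJpred⟩ := hJ
    have hc : (0 : ℝ) < (N : ℝ) / m * ((N : ℝ) - m) := by positivity
    have hkey : ((N : ℝ) / m) * (∑ j ∈ J, v j) - N * μ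
        = ((N : ℝ) / m * ((N : ℝ) - m)) * Z J := by
      rw [hZ]
      field_simp
    rw [hkey, abs_mul, abs_of_pos hc] at hJpred
    have haZ : a ≤ |Z J| := by
      have h1 : ε / ((N : ℝ) / m * ((N : ℝ) - m)) ≤ |Z J| :=
        (div_le_iff₀ hc).2 (by linarith)
      have h2 : a = ε / ((N : ℝ) / m * ((N : ℝ) - m)) := by
        rw [ha]
        field_simp
      rw [h2]
      exact h1
    rcases le_abs.1 haZ with h | h
    · exact Finset.mem_union_left _ (Finset.mem_filter.2 ⟨hJP, h⟩)
    · exact Finset.mem_union_right _ (Finset.mem_filter.2 ⟨hJP, by linarith⟩)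
  have hcount : (((P.filter (fun J => ε ≤ |((N : ℝ) / m) * (∑ j ∈ J, v j) - N * μ|)).card : ℝ))
      ≤ ((P.filter (fun J => a ≤ Z J)).card : ℝ) + ((P.filter (fun J => Z J ≤ -a)).card : ℝ) := by
    have h1 := Finset.card_le_card hsub
    have h2 := Finset.card_union_le (P.filter (fun J => a ≤ Z J)) (P.filter (fun J => Z J ≤ -a))
    exact_mod_cast le_trans h1 h2
  -- bound each count
  have hVne : V ≠ 0 := ne_of_gt hVpos
  have hexp_eq : lam ^ 2 * R ^ 2 / 2 * Sb - lam * a = -(a ^ 2 / (2 * V)) := by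
    rw [hlam, hV]
    have hSbne : Sb ≠ 0 := ne_of_gt hSbpos
    have hRne : R ≠ 0 := ne_of_gt hR
    field_simp
    ring
  have upper' : ((P.filter (fun J => a ≤ Z J)).card : ℝ)
      ≤ (N.choose m : ℝ) * Real.exp (-(a ^ 2 / (2 * V))) := by
    have h := (le_div_iff₀ (Real.exp_pos (lam * a))).2 upper
    rwa [mul_div_assoc, ← Real.exp_sub, hexp_eq] at h
  have lower' : ((P.filter (fun J => Z J ≤ -a)).card : ℝ)
      ≤ (N.choose m : ℝ) * Real.exp (-(a ^ 2 / (2 * V))) := by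
    have h := (le_div_iff₀ (Real.exp_pos (lam * a))).2 lower
    rwa [mul_div_assoc, ← Real.exp_sub, hexp_eq] at h
  -- final exponent comparison
  have hfinal : Real.exp (-(a ^ 2 / (2 * V)))
      ≤ Real.exp (-(((m : ℝ) - 1) / N) * ε ^ 2 / (2 * N * (1 - ((m : ℝ) - 1) / N) * R ^ 2)) := by
    apply Real.exp_le_exp.2
    have hden : (1 : ℝ) - ((m : ℝ) - 1) / N = ((N : ℝ) - m + 1) / N := by
      field_simp
      ring
    rw [hden]
    have hNm1pos : (0 : ℝ) < (N : ℝ) - m + 1 := by linarith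
    have hNne : (N : ℝ) ≠ 0 := ne_of_gt hN0
    have hRne : R ≠ 0 := ne_of_gt hR
    have h1ne : ((N : ℝ) - m + 1) ≠ 0 := ne_of_gt hNm1pos
    have hE : -(((m : ℝ) - 1) / N) * ε ^ 2 / (2 * N * (((N : ℝ) - m + 1) / N) * R ^ 2)
        = -((((m : ℝ) - 1) * ε ^ 2) / (2 * N * ((N : ℝ) - m + 1) * R ^ 2)) := by
      rw [neg_mul, neg_div, neg_inj, div_eq_div_iff (by positivity) (by positivity)]
      field_simp
    rw [hE, neg_le_neg_iff]
    -- goal : (m-1)ε²/(2N(N-m+1)R²) ≤ a²/(2V)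
    have hd1 : (0 : ℝ) < (N : ℝ) - m - 1/2 := by linarith
    have hd2 : (0 : ℝ) < (N : ℝ) - 1/2 := by linarith
    have hSb_le : Sb ≤ (m : ℝ) / (((N : ℝ) - m - 1/2) * ((N : ℝ) - 1/2)) := by
      have h := hs_sum_sq N m hmN2
      have heq : 1 / ((N : ℝ) - m - 1/2) - 1 / ((N : ℝ) - 1/2)
          = (m : ℝ) / (((N : ℝ) - m - 1/2) * ((N : ℝ) - 1/2)) := by
        rw [div_sub_div _ _ (ne_of_gt hd1) (ne_of_gt hd2), div_eq_div_iff (by positivity) (by positivity)]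
        ring
      rw [← heq]
      exact h
    have hm1nn : (0 : ℝ) ≤ (m : ℝ) - 1 := by
      have : (1 : ℝ) ≤ m := by exact_mod_cast hm
      linarith
    have hmR : (m : ℝ) ≤ N := by exact_mod_cast hmN
    have hm1R : (1 : ℝ) ≤ m := by exact_mod_cast hm
    rw [div_le_div_iff₀ (by positivity) (by positivity : (0:ℝ) < 2 * V)]
    have hstepV : ((m : ℝ) - 1) * ε ^ 2 * (2 * V)
        ≤ (((m : ℝ) - 1) * ε ^ 2 * (2 * R ^ 2)) * ((m : ℝ) / (((N : ℝ) - m - 1/2) * ((N : ℝ) - 1/2))) := by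
      calc ((m : ℝ) - 1) * ε ^ 2 * (2 * V) = (((m : ℝ) - 1) * ε ^ 2 * (2 * R ^ 2)) * Sb := by
            rw [hV]; ring
        _ ≤ (((m : ℝ) - 1) * ε ^ 2 * (2 * R ^ 2)) * ((m : ℝ) / (((N : ℝ) - m - 1/2) * ((N : ℝ) - 1/2))) := by
            apply mul_le_mul_of_nonneg_left hSb_le
            have h2R : (0 : ℝ) ≤ 2 * R ^ 2 := by positivity
            exact mul_nonneg (mul_nonneg hm1nn (sq_nonneg ε)) h2R
    refine le_trans hstepV ?_
    have k1 : ((N : ℝ) - m) ^ 2 ≤ ((N : ℝ) - m + 1) * ((N : ℝ) - m - 1/2) := by nlinarith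
    have k2 : ((m : ℝ) - 1) * N ≤ (m : ℝ) * ((N : ℝ) - 1/2) := by linarith
    have key : ((m : ℝ) - 1) * N * ((N : ℝ) - m) ^ 2
        ≤ (m : ℝ) * (((N : ℝ) - m + 1) * (((N : ℝ) - m - 1/2) * ((N : ℝ) - 1/2))) := by
      nlinarith [mul_le_mul k2 k1 (sq_nonneg ((N : ℝ) - m))
        (by positivity : (0:ℝ) ≤ (m : ℝ) * ((N : ℝ) - 1/2))]
    have lhs_eq : (((m : ℝ) - 1) * ε ^ 2 * (2 * R ^ 2)) * ((m : ℝ) / (((N : ℝ) - m - 1/2) * ((N : ℝ) - 1/2)))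
        = (((m : ℝ) - 1) * ε ^ 2 * 2 * R ^ 2 * m) / (((N : ℝ) - m - 1/2) * ((N : ℝ) - 1/2)) := by
      ring
    have ha2 : a ^ 2 = ((m : ℝ) * ε) ^ 2 / (((N : ℝ) * ((N : ℝ) - m)) ^ 2) := by
      rw [ha, div_pow]
    have rhs_eq : a ^ 2 * (2 * N * ((N : ℝ) - m + 1) * R ^ 2)
        = ((m : ℝ) ^ 2 * ε ^ 2 * 2 * N * ((N : ℝ) - m + 1) * R ^ 2) / (((N : ℝ) * ((N : ℝ) - m)) ^ 2) := by
      rw [ha2]; ring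
    rw [lhs_eq, rhs_eq, div_le_div_iff₀ (by positivity) (by positivity)]
    calc ((m : ℝ) - 1) * ε ^ 2 * 2 * R ^ 2 * m * ((N : ℝ) * ((N : ℝ) - m)) ^ 2
        = (2 * R ^ 2 * (m : ℝ) * ε ^ 2 * N) * (((m : ℝ) - 1) * N * ((N : ℝ) - m) ^ 2) := by ring
      _ ≤ (2 * R ^ 2 * (m : ℝ) * ε ^ 2 * N) *
            ((m : ℝ) * (((N : ℝ) - m + 1) * (((N : ℝ) - m - 1/2) * ((N : ℝ) - 1/2)))) := by
          apply mul_le_mul_of_nonneg_left key (by positivity)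
      _ = (m : ℝ) ^ 2 * ε ^ 2 * 2 * N * ((N : ℝ) - m + 1) * R ^ 2
            * (((N : ℝ) - m - 1/2) * ((N : ℝ) - 1/2)) := by ring
  -- conclude
  have hPcard : ((P.card : ℕ) : ℝ) = (N.choose m : ℝ) := by
    rw [hP, Finset.card_powersetCard, Finset.card_univ, Fintype.card_fin]
  rw [div_le_iff₀ (by rw [hPcard]; exact hCpos)]
  calc (((P.filter (fun J => ε ≤ |((N : ℝ) / m) * (∑ j ∈ J, v j) - N * μ|)).card : ℝ))
      ≤ ((P.filter (fun J => a ≤ Z J)).card : ℝ) + ((P.filter (fun J => Z J ≤ -a)).card : ℝ) :=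
        hcount
    _ ≤ 2 * ((N.choose m : ℝ) * Real.exp (-(a ^ 2 / (2 * V)))) := by linarith
    _ ≤ 2 * ((N.choose m : ℝ) * Real.exp (-(((m : ℝ) - 1) / N) * ε ^ 2 /
          (2 * N * (1 - ((m : ℝ) - 1) / N) * R ^ 2))) := by
        apply mul_le_mul_of_nonneg_left _ (by norm_num)
        exact mul_le_mul_of_nonneg_left hfinal hCpos.le
    _ = 2 * Real.exp (-(((m : ℝ) - 1) / N) * ε ^ 2 /
          (2 * N * (1 - ((m : ℝ) - 1) / N) * R ^ 2)) * (P.card : ℝ) := by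
        rw [hPcard]
        ring
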